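/- Let {e_i}_{i∈I} be a finite family of vectors in ℝ^d satisfying ∑_{i∈I} e_i e_iᵀ = c·I_d for some c > 0, and let T : ℝ^d → ℝ^d be an invertible linear map whose adjoint T† permutes the family {e_i} (i.e., there is a permutation σ of I with T†(e_i) = e_{σ(i)} for all i). Then T is orthogonal: TᵀT = I_d. -/
import Mathlib


open Matrix

lemma conj_vecMulVec {d : ℕ} (T : Matrix (Fin d) (Fin d) ℝ) (u : Fin d → ℝ) :
    Tᵀ * Matrix.vecMulVec u u * T = Matrix.vecMulVec (Tᵀ *ᵥ u) (Tᵀ *ᵥ u) := by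
  ext a b
  simp [Matrix.mul_apply, Matrix.vecMulVec_apply, Matrix.mulVec, dotProduct,
    Finset.sum_mul, Finset.mul_sum, Matrix.transpose_apply]
  congr 1; ext k
  congr 1; ext l
  ring

theorem stmt_11 {d : ℕ} {I : Type*} [Fintype I]
    (e : I → (Fin d → ℝ)) (c : ℝ) (hc : 0 < c)
    (hsum : ∑ i, Matrix.vecMulVec (e i) (e i) = c • (1 : Matrix (Fin d) (Fin d) ℝ))
    (T : Matrix (Fin d) (Fin d) ℝ) (hT : IsUnit T)
    (σ : Equiv.Perm I) (hperm : ∀ i, Tᵀ *ᵥ e i = e (σ i)) :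
    Tᵀ * T = 1 := by
  have key : Tᵀ * (∑ i, Matrix.vecMulVec (e i) (e i)) * T
      = ∑ i, Matrix.vecMulVec (e (σ i)) (e (σ i)) := by
    rw [Finset.mul_sum, Finset.sum_mul]
    exact Finset.sum_congr rfl fun i _ => by rw [conj_vecMulVec, hperm]
  rw [hsum, Equiv.sum_comp σ (fun i => Matrix.vecMulVec (e i) (e i)), hsum] at key
  have : c • (Tᵀ * T) = c • (1 : Matrix (Fin d) (Fin d) ℝ) := by
    rw [← key]; simp [Matrix.mul_smul, Matrix.smul_mul]
  exact smul_right_injective _ hc.ne' this
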